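/- Let A be a real n×n matrix with xᵀAx > 0 for all nonzero real x, C a real m×m symmetric positive semidefinite matrix, B a real m×n matrix of full row rank, and α, β > 0, and let M = (1/2)·[[αI + A, Bᵀ], [−B, βI + C]] and N = (1/2)·[[αI − A, −Bᵀ], [B, βI − C]]. Then the spectral radius of the iteration matrix Γ = M⁻¹N (the maximum of |λ| over all complex eigenvalues λ of Γ) is strictly less than 1. -/

import Mathlib

open Matrix

/-- The shift-splitting matrix `M = (1/2)⬝[[αI + A, Bᵀ], [−B, βI + C]]`. -/
noncomputable def MSS {n m : ℕ} (A : Matrix (Fin n) (Fin n) ℝ) (B : Matrix (Fin m) (Fin n) ℝ)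
    (C : Matrix (Fin m) (Fin m) ℝ) (α β : ℝ) :
    Matrix (Fin n ⊕ Fin m) (Fin n ⊕ Fin m) ℝ :=
  (1 / 2 : ℝ) • Matrix.fromBlocks (α • (1 : Matrix (Fin n) (Fin n) ℝ) + A) Bᵀ (-B)
    (β • (1 : Matrix (Fin m) (Fin m) ℝ) + C)

/-- The shift-splitting matrix `N = (1/2)⬝[[αI − A, −Bᵀ], [B, βI − C]]`. -/
noncomputable def NSS {n m : ℕ} (A : Matrix (Fin n) (Fin n) ℝ) (B : Matrix (Fin m) (Fin n) ℝ)
    (C : Matrix (Fin m) (Fin m) ℝ) (α β : ℝ) :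
    Matrix (Fin n ⊕ Fin m) (Fin n ⊕ Fin m) ℝ :=
  (1 / 2 : ℝ) • Matrix.fromBlocks (α • (1 : Matrix (Fin n) (Fin n) ℝ) - A) (-Bᵀ) B
    (β • (1 : Matrix (Fin m) (Fin m) ℝ) - C)

lemma re_quad {p : Type*} [Fintype p] (W : Matrix p p ℝ) (z : p → ℂ) :
    (star z ⬝ᵥ (W.map Complex.ofReal) *ᵥ z).re
      = (fun i => (z i).re) ⬝ᵥ W *ᵥ (fun i => (z i).re)
        + (fun i => (z i).im) ⬝ᵥ W *ᵥ (fun i => (z i).im) := by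
  simp only [dotProduct, mulVec, Matrix.map_apply, Pi.star_apply, Complex.re_sum,
    Finset.mul_sum, Finset.sum_mul, ← Finset.sum_add_distrib]
  refine Finset.sum_congr rfl fun i _ => Finset.sum_congr rfl fun j _ => ?_
  simp [Complex.mul_re, RCLike.star_def, Complex.conj_re, Complex.conj_im]

lemma mulVec_map_re {p q : Type*} [Fintype q] (W : Matrix p q ℝ) (z : q → ℂ) (i : p) :
    (((W.map Complex.ofReal) *ᵥ z) i).re = (W *ᵥ fun j => (z j).re) i := by
  simp [mulVec, dotProduct, Complex.re_sum]

lemma mulVec_map_im {p q : Type*} [Fintype q] (W : Matrix p q ℝ) (z : q → ℂ) (i : p) :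
    (((W.map Complex.ofReal) *ᵥ z) i).im = (W *ᵥ fun j => (z j).im) i := by
  simp [mulVec, dotProduct, Complex.im_sum]

lemma quadW {n m : ℕ} (A : Matrix (Fin n) (Fin n) ℝ) (B : Matrix (Fin m) (Fin n) ℝ)
    (C : Matrix (Fin m) (Fin m) ℝ) (x : Fin n ⊕ Fin m → ℝ) :
    x ⬝ᵥ (fromBlocks A Bᵀ (-B) C) *ᵥ x
      = (x ∘ Sum.inl) ⬝ᵥ A *ᵥ (x ∘ Sum.inl) + (x ∘ Sum.inr) ⬝ᵥ C *ᵥ (x ∘ Sum.inr) := by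
  have hx : x = Sum.elim (x ∘ Sum.inl) (x ∘ Sum.inr) := (Sum.elim_comp_inl_inr x).symm
  rw [hx, fromBlocks_mulVec, sumElim_dotProduct_sumElim]
  have hcross : (x ∘ Sum.inl) ⬝ᵥ Bᵀ *ᵥ (x ∘ Sum.inr) = (x ∘ Sum.inr) ⬝ᵥ B *ᵥ (x ∘ Sum.inl) := by
    rw [dotProduct_mulVec, vecMul_transpose, dotProduct_comm]
  simp only [dotProduct_add, neg_mulVec, dotProduct_neg, Sum.elim_comp_inl, Sum.elim_comp_inr,
    hcross]
  ring

lemma BTker {n m : ℕ} (B : Matrix (Fin m) (Fin n) ℝ) (hB : B.rank = m) (w : Fin m → ℝ)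
    (h : Bᵀ *ᵥ w = 0) : w = 0 := by
  have hr : Bᵀ.rank = m := by rw [rank_transpose, hB]
  have hrn := LinearMap.finrank_range_add_finrank_ker (Bᵀ.mulVecLin)
  rw [Module.finrank_pi] at hrn
  have hrdef : Bᵀ.rank = Module.finrank ℝ (LinearMap.range Bᵀ.mulVecLin) := rfl
  have hker : LinearMap.ker Bᵀ.mulVecLin = ⊥ := by
    have h0 : Module.finrank ℝ (LinearMap.ker Bᵀ.mulVecLin) = 0 := by
      simp only [Fintype.card_fin] at hrn
      omega
    exact Submodule.finrank_eq_zero.mp h0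
  have hw : w ∈ LinearMap.ker Bᵀ.mulVecLin := by
    rw [LinearMap.mem_ker, Matrix.mulVecLin_apply]; exact h
  rw [hker, Submodule.mem_bot] at hw; exact hw

lemma eig_exists {p : Type*} [Fintype p] [DecidableEq p] (G : Matrix p p ℂ) (lam : ℂ)
    (h : lam ∈ spectrum ℂ G) : ∃ z : p → ℂ, z ≠ 0 ∧ G *ᵥ z = lam • z := by
  rw [spectrum.mem_iff] at h
  have hdet : (algebraMap ℂ (Matrix p p ℂ) lam - G).det = 0 := by
    by_contra hd
    exact h ((Matrix.isUnit_iff_isUnit_det _).mpr (isUnit_iff_ne_zero.mpr hd))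
  obtain ⟨z, hz0, hz⟩ := (Matrix.exists_mulVec_eq_zero_iff).mpr hdet
  refine ⟨z, hz0, ?_⟩
  have halg : algebraMap ℂ (Matrix p p ℂ) lam = lam • 1 := Algebra.algebraMap_eq_smul_one lam
  rw [halg, sub_mulVec, smul_mulVec, one_mulVec] at hz
  exact (sub_eq_zero.mp hz).symm

lemma mapR_mul {p q r : Type*} [Fintype q] (P : Matrix p q ℝ) (Q : Matrix q r ℝ) :
    (P * Q).map Complex.ofReal = P.map Complex.ofReal * Q.map Complex.ofReal := by
  exact Matrix.map_mul (f := Complex.ofRealHom)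

/-- In the shift-splitting setting, every complex eigenvalue of the
iteration matrix `Γ = M⁻¹ N` has modulus strictly less than one; hence the spectral radius
of `Γ` (the maximum of `|λ|` over the eigenvalues) is strictly less than `1`. -/
theorem spectralRadius_iteration_matrix_lt_one
    (n m : ℕ) (A : Matrix (Fin n) (Fin n) ℝ)
    (hA : ∀ x : Fin n → ℝ, x ≠ 0 → 0 < x ⬝ᵥ A.mulVec x)
    (C : Matrix (Fin m) (Fin m) ℝ) (hC : C.PosSemidef)
    (B : Matrix (Fin m) (Fin n) ℝ) (hB : B.rank = m)
    (α β : ℝ) (hα : 0 < α) (hβ : 0 < β) :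
    ∀ lam ∈ spectrum ℂ (((MSS A B C α β)⁻¹ * NSS A B C α β).map Complex.ofReal),
      ‖lam‖ < 1 := by
  classical
  intro lam hlam
  set c : Fin n ⊕ Fin m → ℝ := Sum.elim (fun _ => α) (fun _ => β) with hc
  set W : Matrix (Fin n ⊕ Fin m) (Fin n ⊕ Fin m) ℝ := fromBlocks A Bᵀ (-B) C with hWdef
  set D : Matrix (Fin n ⊕ Fin m) (Fin n ⊕ Fin m) ℝ := diagonal c with hDdef
  have hcpos : ∀ i, 0 < c i := by rintro (i | i) <;> simp [hc, hα, hβ]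
  -- nonnegativity of real quadratic forms
  have hAnn : ∀ u : Fin n → ℝ, 0 ≤ u ⬝ᵥ A *ᵥ u := by
    intro u
    rcases eq_or_ne u 0 with h | h
    · simp [h]
    · exact (hA u h).le
  have hCnn : ∀ v : Fin m → ℝ, 0 ≤ v ⬝ᵥ C *ᵥ v := by
    intro v; simpa [star_trivial] using hC.dotProduct_mulVec_nonneg v
  have hWnn : ∀ x, 0 ≤ x ⬝ᵥ W *ᵥ x := by
    intro x
    rw [hWdef, quadW]
    exact add_nonneg (hAnn _) (hCnn _)
  have hDq : ∀ x : Fin n ⊕ Fin m → ℝ, x ⬝ᵥ D *ᵥ x = ∑ i, c i * (x i * x i) := by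
    intro x
    simp only [hDdef, dotProduct, mulVec_diagonal]
    exact Finset.sum_congr rfl fun i _ => by ring
  -- block identities
  have hM2 : MSS A B C α β = (1 / 2 : ℝ) • (D + W) := by
    rw [MSS, hDdef, hWdef, hc, ← fromBlocks_diagonal, fromBlocks_add]
    simp [smul_one_eq_diagonal]
  have hsub : D - W = fromBlocks (α • (1 : Matrix (Fin n) (Fin n) ℝ) - A) (-Bᵀ) B
      (β • (1 : Matrix (Fin m) (Fin m) ℝ) - C) := by
    rw [hDdef, hWdef, hc, ← fromBlocks_diagonal, sub_eq_add_neg, fromBlocks_neg, fromBlocks_add]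
    simp [smul_one_eq_diagonal, sub_eq_add_neg]
  have hN2 : NSS A B C α β = (1 / 2 : ℝ) • (D - W) := by
    rw [NSS, hsub]
  -- M is invertible
  have hMpos : ∀ x : Fin n ⊕ Fin m → ℝ, x ≠ 0 → 0 < x ⬝ᵥ (MSS A B C α β) *ᵥ x := by
    intro x hx
    rw [hM2, smul_mulVec, dotProduct_smul, add_mulVec, dotProduct_add, smul_eq_mul]
    have hD0 : 0 < x ⬝ᵥ D *ᵥ x := by
      rw [hDq]
      obtain ⟨i, hi⟩ := Function.ne_iff.mp hx
      refine Finset.sum_pos' (fun j _ => mul_nonneg (hcpos j).le (mul_self_nonneg _))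
        ⟨i, Finset.mem_univ i, mul_pos (hcpos i) (mul_self_pos.mpr hi)⟩
    have hW0 := hWnn x
    nlinarith [hD0, hW0]
  have hMdet : IsUnit (MSS A B C α β).det := by
    rw [isUnit_iff_ne_zero]
    intro h0
    obtain ⟨v, hv0, hv⟩ := (Matrix.exists_mulVec_eq_zero_iff).mpr h0
    have hpos := hMpos v hv0
    rw [hv, dotProduct_zero] at hpos
    exact lt_irrefl 0 hpos
  -- complex side
  set Mc := (MSS A B C α β).map Complex.ofReal with hMc
  set Nc := (NSS A B C α β).map Complex.ofReal with hNc
  set Dc := D.map Complex.ofReal with hDc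
  set Wc := W.map Complex.ofReal with hWc
  obtain ⟨z, hz0, hzeig⟩ := eig_exists _ lam hlam
  have hprod : (MSS A B C α β) * ((MSS A B C α β)⁻¹ * NSS A B C α β) = NSS A B C α β := by
    rw [← mul_assoc, mul_nonsing_inv _ hMdet, one_mul]
  have hMcG : Mc * ((MSS A B C α β)⁻¹ * NSS A B C α β).map Complex.ofReal = Nc := by
    rw [hMc, hNc, ← mapR_mul, hprod]
  have hNz : Nc *ᵥ z = lam • (Mc *ᵥ z) := by
    rw [← hMcG, ← mulVec_mulVec, hzeig, mulVec_smul]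
  have hMcEq : Mc = (1 / 2 : ℂ) • (Dc + Wc) := by
    rw [hMc, hM2]; ext i j
    simp only [Matrix.map_apply, Matrix.smul_apply, Matrix.add_apply, hDc, hWc, smul_eq_mul]
    push_cast; ring
  have hNcEq : Nc = (1 / 2 : ℂ) • (Dc - Wc) := by
    rw [hNc, hN2]; ext i j
    simp only [Matrix.map_apply, Matrix.smul_apply, Matrix.sub_apply, hDc, hWc, smul_eq_mul]
    push_cast; ring
  have hEig : (Dc - Wc) *ᵥ z = lam • ((Dc + Wc) *ᵥ z) := by
    rw [hMcEq, hNcEq, smul_mulVec, smul_mulVec, smul_comm lam] at hNz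
    exact smul_right_injective (Fin n ⊕ Fin m → ℂ) (by norm_num : (1/2 : ℂ) ≠ 0) hNz
  set d0 : ℝ := ∑ i, c i * Complex.normSq (z i) with hd0
  have hDcdiag : Dc = diagonal fun i => (c i : ℂ) := by
    rw [hDc, hDdef, diagonal_map (by simp)]
  have hd : star z ⬝ᵥ Dc *ᵥ z = (d0 : ℂ) := by
    rw [hDcdiag]
    simp only [dotProduct, mulVec_diagonal, hd0, Pi.star_apply]
    push_cast
    refine Finset.sum_congr rfl fun i _ => ?_
    rw [RCLike.star_def, mul_left_comm, mul_comm ((starRingEnd ℂ) (z i)), Complex.mul_conj]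
  have hd0pos : 0 < d0 := by
    obtain ⟨i, hi⟩ := Function.ne_iff.mp hz0
    refine Finset.sum_pos' (fun j _ => mul_nonneg (hcpos j).le (Complex.normSq_nonneg _))
      ⟨i, Finset.mem_univ i, mul_pos (hcpos i) (Complex.normSq_pos.mpr hi)⟩
  set a := star z ⬝ᵥ Wc *ᵥ z with ha
  have hscal : (d0 : ℂ) - a = lam * ((d0 : ℂ) + a) := by
    have h := congrArg (fun w => star z ⬝ᵥ w) hEig
    simpa only [sub_mulVec, add_mulVec, dotProduct_sub, dotProduct_add, dotProduct_smul,
      smul_eq_mul, hd, ← ha] using h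
  have haRe : 0 ≤ a.re := by
    rw [ha, hWc, re_quad]
    exact add_nonneg (hWnn _) (hWnn _)
  rcases lt_or_eq_of_le haRe with hpos | hzero
  · -- strict case
    have hne : (d0 : ℂ) + a ≠ 0 := by
      intro h
      have h' := congrArg Complex.re h
      simp only [Complex.add_re, Complex.ofReal_re, Complex.zero_re] at h'
      linarith
    have habs : ‖(d0 : ℂ) - a‖ < ‖(d0 : ℂ) + a‖ := by
      have hsq : Complex.normSq ((d0 : ℂ) - a) < Complex.normSq ((d0 : ℂ) + a) := by
        simp only [Complex.normSq_apply, Complex.sub_re, Complex.add_re, Complex.sub_im,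
          Complex.add_im, Complex.ofReal_re, Complex.ofReal_im]
        nlinarith [hd0pos, hpos]
      have h' := Real.sqrt_lt_sqrt (Complex.normSq_nonneg _) hsq
      simpa [Complex.norm_def] using h'
    have hapos : 0 < ‖(d0 : ℂ) + a‖ := norm_pos_iff.mpr hne
    have hmul : ‖lam‖ * ‖(d0 : ℂ) + a‖ < ‖(d0 : ℂ) + a‖ := by
      rw [← norm_mul, ← hscal]; exact habs
    exact (mul_lt_iff_lt_one_left hapos).mp hmul
  · -- boundary case: leads to a contradiction
    exfalso
    have hsplit : a.re = (fun i => (z i).re) ⬝ᵥ W *ᵥ (fun i => (z i).re)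
        + (fun i => (z i).im) ⬝ᵥ W *ᵥ (fun i => (z i).im) := by
      rw [ha, hWc]; exact re_quad W z
    have hr0 : (fun i => (z i).re) ⬝ᵥ W *ᵥ (fun i => (z i).re) = 0 := by
      have := hWnn (fun i => (z i).re); have := hWnn (fun i => (z i).im); linarith
    have hs0 : (fun i => (z i).im) ⬝ᵥ W *ᵥ (fun i => (z i).im) = 0 := by
      have := hWnn (fun i => (z i).re); have := hWnn (fun i => (z i).im); linarith
    have key : ∀ y : Fin n ⊕ Fin m → ℝ, y ⬝ᵥ W *ᵥ y = 0 →
        (y ∘ Sum.inl = 0 ∧ C *ᵥ (y ∘ Sum.inr) = 0) := by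
      intro y hy
      rw [hWdef, quadW] at hy
      have hAy := hAnn (y ∘ Sum.inl)
      have hCy := hCnn (y ∘ Sum.inr)
      have h1 : (y ∘ Sum.inl) ⬝ᵥ A *ᵥ (y ∘ Sum.inl) = 0 := by linarith
      have h2 : (y ∘ Sum.inr) ⬝ᵥ C *ᵥ (y ∘ Sum.inr) = 0 := by linarith
      refine ⟨?_, ?_⟩
      · by_contra h
        exact (hA _ h).ne' h1
      · exact (hC.dotProduct_mulVec_zero_iff _).mp (by simpa [star_trivial] using h2)
    obtain ⟨hrl, hrC⟩ := key _ hr0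
    obtain ⟨hsl, hsC⟩ := key _ hs0
    set zu := z ∘ Sum.inl with hzu'
    set zv := z ∘ Sum.inr with hzv'
    have hzu : zu = 0 := by
      funext i
      exact Complex.ext (congrFun hrl i) (congrFun hsl i)
    have hCzv : (C.map Complex.ofReal) *ᵥ zv = 0 := by
      funext i
      refine Complex.ext ?_ ?_
      · rw [mulVec_map_re]; exact congrFun hrC i
      · rw [mulVec_map_im]; exact congrFun hsC i
    have hz' : z = Sum.elim zu zv := (Sum.elim_comp_inl_inr z).symm
    have hWcB : Wc = fromBlocks (A.map Complex.ofReal) (Bᵀ.map Complex.ofReal)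
        (-(B.map Complex.ofReal)) (C.map Complex.ofReal) := by
      rw [hWc, hWdef]
      ext i j
      cases i <;> cases j <;> simp [fromBlocks]
    have hWcz : Wc *ᵥ z = Sum.elim ((Bᵀ.map Complex.ofReal) *ᵥ zv) 0 := by
      conv_lhs => rw [hWcB, hz', fromBlocks_mulVec]
      simp only [Sum.elim_comp_inl, Sum.elim_comp_inr]
      rw [hzu, hCzv]
      simp [neg_mulVec]
    have hstarz : star z = Sum.elim (star zu) (star zv) := by
      funext i
      cases i <;> rfl
    have ha0 : a = 0 := by
      rw [ha, hWcz, hstarz, sumElim_dotProduct_sumElim, hzu]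
      simp
    have hlam1 : lam = 1 := by
      rw [ha0, sub_zero, add_zero] at hscal
      have hd0ne : (d0 : ℂ) ≠ 0 := by exact_mod_cast hd0pos.ne'
      have h1 : (1 : ℂ) * (d0 : ℂ) = lam * (d0 : ℂ) := by rw [one_mul]; exact hscal
      exact (mul_right_cancel₀ hd0ne h1).symm
    have hWz0 : Wc *ᵥ z = 0 := by
      funext i
      have h := congrFun hEig i
      rw [hlam1, one_smul, sub_mulVec, add_mulVec] at h
      simp only [Pi.sub_apply, Pi.add_apply] at h
      have : (Wc *ᵥ z) i = 0 := by linear_combination (-1/2 : ℂ) * h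
      simpa using this
    have hBzv : (Bᵀ.map Complex.ofReal) *ᵥ zv = 0 := by
      funext i
      exact congrFun (hWcz.symm.trans hWz0) (Sum.inl i)
    have hzv : zv = 0 := by
      have h1 : Bᵀ *ᵥ (fun j => (zv j).re) = 0 := by
        funext i
        rw [← mulVec_map_re, hBzv]; rfl
      have h2 : Bᵀ *ᵥ (fun j => (zv j).im) = 0 := by
        funext i
        rw [← mulVec_map_im, hBzv]; rfl
      have hre := BTker B hB _ h1
      have him := BTker B hB _ h2
      funext j
      exact Complex.ext (congrFun hre j) (congrFun him j)
    apply hz0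
    rw [hz', hzu, hzv]
    funext i
    cases i <;> rfl
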